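/- Let η ∈ ℝ and let Q ∈ Sym₀(3) satisfy J(Q,η) < +∞. Then J(Q,η) ≥ ψ_s(Q) − ln(|Q|² − η), where ψ_s(Q) = inf_{f ∈ A(Q)} ∫_{S²} f(p) ln f(p) dp is the Ball–Majumdar singular potential. In particular, J(·,η) blows up to +∞ uniformly at the boundary of its domain { Q ∈ Sym₀(3) : v_min(Q) > −1/3, |Q|² > η }. -/

import Mathlib

/-
Common setting for the formalisation of
"An analysis of equilibria in dense nematic liquid crystals" (J. M. Taylor).

* `V3` is ℝ³ (as a Euclidean space), `sph` is the unit sphere S²,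
  and `μS` is the 2-dimensional Hausdorff (surface) measure restricted to S².
* `IsProb f` says `f ∈ P(S²)`.
* `FE f η` is the free energy `F(f,η) ∈ ℝ ∪ {+∞}` (realised as `EReal`),
  with the conventions `0 ln 0 = 0`, `0 ⬝ (+∞) = 0` and `-ln x = +∞` for `x ≤ 0`:
  the value is the real integral whenever the argument of the logarithm is a.e.
  positive on `{f ≠ 0}` and the integrand is integrable, and `+∞` otherwise.
-/

open MeasureTheory Matrix Filter
open scoped ENNReal Topology Classical

noncomputable section

abbrev V3 : Type := EuclideanSpace ℝ (Fin 3)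

/-- The unit sphere S² in ℝ³. -/
def sph : Set V3 := Metric.sphere (0 : V3) 1

/-- The 2-dimensional Hausdorff (surface) measure on S². -/
def μS : Measure V3 := (μH[2]).restrict sph

abbrev Mat3 : Type := Matrix (Fin 3) (Fin 3) ℝ

/-- Membership in Sym₀(3): real symmetric traceless 3×3 matrices. -/
def Sym0 (Q : Mat3) : Prop := Q.IsSymm ∧ Q.trace = 0

/-- The Frobenius inner product `A·B = trace (A*B)` (on symmetric matrices). -/
def mdot (A B : Mat3) : ℝ := (A * B).trace

/-- The quadratic form `p ↦ Qp·p`. -/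
def qf (Q : Mat3) (p : V3) : ℝ := ∑ i, ∑ j, Q i j * p i * p j

/-- The smallest eigenvalue of a symmetric matrix, via Rayleigh quotients on S². -/
def vmin (Q : Mat3) : ℝ := ⨅ p : sph, qf Q (p : V3)

/-- `f ∈ P(S²)`. -/
def IsProb (f : V3 → ℝ) : Prop :=
  Integrable f μS ∧ (∀ᵐ p ∂μS, 0 ≤ f p) ∧ ∫ p, f p ∂μS = 1

/-- The interaction term `p ↦ ∫_{S²} ((p·q)² − 1/3) f(q) dq`. -/
def Kf (f : V3 → ℝ) (p : V3) : ℝ :=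
  ∫ q, ((∑ i, p i * q i) ^ 2 - 1 / 3) * f q ∂μS

/-- The free energy `F(f,η) ∈ ℝ ∪ {+∞}`. -/
def FE (f : V3 → ℝ) (η : ℝ) : EReal :=
  if (∀ᵐ p ∂μS, f p ≠ 0 → η < Kf f p) ∧
      Integrable (fun p => f p * Real.log (f p) - f p * Real.log (Kf f p - η)) μS
  then ((∫ p, f p * Real.log (f p) - f p * Real.log (Kf f p - η) ∂μS : ℝ) : EReal)
  else ⊤

/-- The Q-tensor `Q(f) = ∫_{S²} (p⊗p − (1/3)I) f(p) dp`. -/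
def Qten (f : V3 → ℝ) : Mat3 :=
  Matrix.of fun i j => ∫ p, f p * (p i * p j - if i = j then (1 : ℝ) / 3 else 0) ∂μS

/-- The macroscopic energy `J(Q,η) = inf_{f ∈ A(Q)} F(f,η)` (`= +∞` when `A(Q) = ∅`). -/
def Jfun (Q : Mat3) (η : ℝ) : EReal :=
  sInf {y : EReal | ∃ f : V3 → ℝ, IsProb f ∧ Qten f = Q ∧ FE f η = y}

/-- The dual objective `D(Q,λ,η) = λ·Q − ln ∫_{S²} exp(λp·p) max(Qp·p − η, 0) dp`. -/
def Dob (Q lam : Mat3) (η : ℝ) : ℝ :=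
  mdot lam Q - Real.log (∫ p, Real.exp (qf lam p) * max (qf Q p - η) 0 ∂μS)

/-- The effective domain of `J(·,η)`. -/
def domJ (η : ℝ) : Set Mat3 :=
  {Q : Mat3 | Sym0 Q ∧ -(1/3) < vmin Q ∧ η < mdot Q Q}

/-- The matrix `∫_{S²} (f(p)/(Qp·p − η)) (p⊗p − (1/3)I) dp` (integrand `0` where `f` vanishes,
by the junk-value conventions of division in Lean). -/
def Mmat (f : V3 → ℝ) (Q : Mat3) (η : ℝ) : Mat3 :=
  Matrix.of fun i j =>
    ∫ p, f p / (qf Q p - η) * (p i * p j - if i = j then (1 : ℝ) / 3 else 0) ∂μS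

/-- The entropy `∫_{S²} f ln f ∈ ℝ ∪ {+∞}`. -/
def EntE (f : V3 → ℝ) : EReal :=
  if Integrable (fun p => f p * Real.log (f p)) μS
  then ((∫ p, f p * Real.log (f p) ∂μS : ℝ) : EReal)
  else ⊤

/-- The Ball–Majumdar singular potential `ψ_s(Q) = inf_{f ∈ A(Q)} ∫ f ln f`. -/
def psiS (Q : Mat3) : EReal :=
  sInf {y : EReal | ∃ f : V3 → ℝ, IsProb f ∧ Qten f = Q ∧ EntE f = y}

/-- `f` is an `L^p`-local minimiser of `F(·,η)`. -/
def LpLocMin (pp : ℝ≥0∞) (η : ℝ) (f : V3 → ℝ) : Prop :=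
  FE f η < ⊤ ∧ ∃ ε : ℝ, 0 < ε ∧ ∀ g : V3 → ℝ, IsProb g →
    eLpNorm (g - f) pp μS < ENNReal.ofReal ε → FE f η ≤ FE g η

lemma sph_nonempty : Set.Nonempty sph := ⟨EuclideanSpace.single 0 1, by simp [sph]⟩
instance : Nonempty ↥sph := sph_nonempty.to_subtype
lemma measurableSet_sph : MeasurableSet sph := (Metric.isClosed_sphere).measurableSet
lemma norm_one_of_sph {p : V3} (hp : p ∈ sph) : ‖p‖ = 1 := by simpa [sph] using hp
lemma sum_sq_of_sph {p : V3} (hp : p ∈ sph) : ∑ i, (p i)^2 = 1 := by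
  have h := norm_one_of_sph hp
  rw [EuclideanSpace.norm_eq] at h
  have h2 : √(∑ i, (p i)^2) = 1 := by simpa using h
  have := congrArg (fun x : ℝ => x^2) h2
  simpa [Real.sq_sqrt (by positivity : (0:ℝ) ≤ ∑ i, (p i)^2)] using this
lemma inner_eq_sum (u p : V3) : (inner ℝ u p : ℝ) = ∑ i, u i * p i := by
  simp [PiLp.inner_apply, RCLike.inner_apply, conj_trivial, mul_comm]

-- the sqrt coefficient Lipschitz-type bound
lemma sqrt_coeff_bound {a b : ℝ} (ha : |a| ≤ 3/5) (hb : |b| ≤ 3/5) :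
    |Real.sqrt (1 - a^2) - Real.sqrt (1 - b^2)| ≤ 2 * |a - b| := by
  have ha1 : a^2 ≤ 9/25 := by nlinarith [abs_nonneg a, (abs_le.1 ha).1, (abs_le.1 ha).2]
  have hb1 : b^2 ≤ 9/25 := by nlinarith [abs_nonneg b, (abs_le.1 hb).1, (abs_le.1 hb).2]
  have hra : (4/5 : ℝ) ≤ Real.sqrt (1 - a^2) := by
    rw [show (4/5 : ℝ) = Real.sqrt (16/25) by
      rw [show (16/25 : ℝ) = (4/5)^2 by norm_num, Real.sqrt_sq (by norm_num)]]
    exact Real.sqrt_le_sqrt (by linarith)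
  have hrb : (4/5 : ℝ) ≤ Real.sqrt (1 - b^2) := by
    rw [show (4/5 : ℝ) = Real.sqrt (16/25) by
      rw [show (16/25 : ℝ) = (4/5)^2 by norm_num, Real.sqrt_sq (by norm_num)]]
    exact Real.sqrt_le_sqrt (by linarith)
  have hsa : (Real.sqrt (1 - a^2))^2 = 1 - a^2 := Real.sq_sqrt (by linarith)
  have hsb : (Real.sqrt (1 - b^2))^2 = 1 - b^2 := Real.sq_sqrt (by linarith)
  set x := Real.sqrt (1 - a^2)
  set y := Real.sqrt (1 - b^2)
  have key : (x - y) * (x + y) = (b - a) * (b + a) := by nlinarith [hsa, hsb]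
  have h1 : |x - y| * (8/5) ≤ |x - y| * (x + y) := by
    apply mul_le_mul_of_nonneg_left (by linarith) (abs_nonneg _)
  have h2 : |x - y| * (x + y) = |b - a| * |b + a| := by
    rw [← abs_of_nonneg (by linarith : (0:ℝ) ≤ x + y), ← abs_mul, key, abs_mul]
  have h3 : |b + a| ≤ 6/5 := by
    calc |b + a| ≤ |b| + |a| := abs_add_le _ _
    _ ≤ 6/5 := by linarith
  have h4 : |b - a| = |a - b| := abs_sub_comm b a
  nlinarith [abs_nonneg (a - b), abs_nonneg (b - a)]

lemma cos_lip (a b : ℝ) : |Real.cos a - Real.cos b| ≤ |a - b| := by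
  rw [Real.cos_sub_cos]
  calc |(-2) * Real.sin ((a+b)/2) * Real.sin ((a-b)/2)|
      = 2 * |Real.sin ((a+b)/2)| * |Real.sin ((a-b)/2)| := by
        rw [abs_mul, abs_mul]; norm_num
    _ ≤ 2 * 1 * |(a-b)/2| := by
        nlinarith [Real.abs_sin_le_one ((a+b)/2), (Real.abs_sin_le_abs : |Real.sin ((a-b)/2)| ≤ |(a-b)/2|),
          abs_nonneg (Real.sin ((a+b)/2)), abs_nonneg ((a-b)/2), abs_nonneg (Real.sin ((a-b)/2))]
    _ = |a - b| := by rw [abs_div, abs_two]; ring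

lemma sin_lip (a b : ℝ) : |Real.sin a - Real.sin b| ≤ |a - b| := by
  rw [Real.sin_sub_sin]
  calc |2 * Real.sin ((a-b)/2) * Real.cos ((a+b)/2)|
      = 2 * |Real.sin ((a-b)/2)| * |Real.cos ((a+b)/2)| := by
        rw [abs_mul, abs_mul]; norm_num
    _ ≤ 2 * |(a-b)/2| * 1 := by
        nlinarith [Real.abs_cos_le_one ((a+b)/2), (Real.abs_sin_le_abs : |Real.sin ((a-b)/2)| ≤ |(a-b)/2|),
          abs_nonneg (Real.cos ((a+b)/2)), abs_nonneg ((a-b)/2), abs_nonneg (Real.sin ((a-b)/2))]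
    _ = |a - b| := by rw [abs_div, abs_two]; ring

section Strip
open Real

lemma orthonormal_single_u {u : V3} (hu : u ∈ sph) :
    Orthonormal ℝ (({0} : Set (Fin 3)).restrict (fun _ : Fin 3 => u)) := by
  constructor
  · rintro ⟨i, hi⟩
    exact norm_one_of_sph hu
  · rintro ⟨i, hi⟩ ⟨j, hj⟩ hij
    exact absurd (Subtype.ext ((hi.trans hj.symm : i = j))) hij

lemma exists_onb_head {u : V3} (hu : u ∈ sph) :
    ∃ b : OrthonormalBasis (Fin 3) ℝ V3, b 0 = u := by
  obtain ⟨b, hb⟩ := Orthonormal.exists_orthonormalBasis_extension_of_card_eq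
    (𝕜 := ℝ) (by simp) (orthonormal_single_u hu)
  exact ⟨b, hb 0 rfl⟩

/-- The Lipschitz chart for a strip around the "equator" orthogonal to `b 0`. -/
def chart (b : OrthonormalBasis (Fin 3) ℝ V3) : (Fin 2 → ℝ) → V3 := fun x =>
  (Real.sqrt (1 - (x 1)^2) * Real.cos (x 0)) • b 1 +
  ((Real.sqrt (1 - (x 1)^2) * Real.sin (x 0)) • b 2 + (x 1) • b 0)

lemma chart_lip (b : OrthonormalBasis (Fin 3) ℝ V3) :
    LipschitzOnWith 7 (chart b) {x : Fin 2 → ℝ | |x 1| ≤ 3/5} := by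
  rw [lipschitzOnWith_iff_dist_le_mul]
  intro x hx y hy
  have hx1 : |x 1| ≤ 3/5 := hx
  have hy1 : |y 1| ≤ 3/5 := hy
  have hb : ∀ i, ‖b i‖ = 1 := fun i => b.orthonormal.1 i
  set rx := Real.sqrt (1 - (x 1)^2)
  set ry := Real.sqrt (1 - (y 1)^2)
  have hry : ry ≤ 1 := Real.sqrt_le_one.2 (by nlinarith [sq_nonneg (y 1)])
  have hrxy : |rx - ry| ≤ 2 * |x 1 - y 1| := sqrt_coeff_bound hx1 hy1
  have hd0 : |x 0 - y 0| ≤ dist x y := by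
    simpa [Real.dist_eq] using dist_le_pi_dist x y 0
  have hd1 : |x 1 - y 1| ≤ dist x y := by
    simpa [Real.dist_eq] using dist_le_pi_dist x y 1
  have key : chart b x - chart b y =
      (rx * Real.cos (x 0) - ry * Real.cos (y 0)) • b 1 +
      ((rx * Real.sin (x 0) - ry * Real.sin (y 0)) • b 2 + ((x 1) - (y 1)) • b 0) := by
    simp only [chart]
    module
  have hcos : |rx * Real.cos (x 0) - ry * Real.cos (y 0)| ≤ |rx - ry| + |x 0 - y 0| := by
    have : rx * Real.cos (x 0) - ry * Real.cos (y 0)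
        = (rx - ry) * Real.cos (x 0) + ry * (Real.cos (x 0) - Real.cos (y 0)) := by ring
    rw [this]
    calc |(rx - ry) * Real.cos (x 0) + ry * (Real.cos (x 0) - Real.cos (y 0))|
        ≤ |(rx - ry) * Real.cos (x 0)| + |ry * (Real.cos (x 0) - Real.cos (y 0))| := abs_add_le _ _
      _ ≤ |rx - ry| + |x 0 - y 0| := by
          rw [abs_mul, abs_mul]
          have h1 : |rx - ry| * |Real.cos (x 0)| ≤ |rx - ry| * 1 :=
            mul_le_mul_of_nonneg_left (Real.abs_cos_le_one _) (abs_nonneg _)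
          have h2 : |ry| * |Real.cos (x 0) - Real.cos (y 0)| ≤ 1 * |x 0 - y 0| := by
            apply mul_le_mul (by rwa [abs_of_nonneg (Real.sqrt_nonneg _)])
              (cos_lip _ _) (abs_nonneg _) zero_le_one
          linarith
  have hsin : |rx * Real.sin (x 0) - ry * Real.sin (y 0)| ≤ |rx - ry| + |x 0 - y 0| := by
    have : rx * Real.sin (x 0) - ry * Real.sin (y 0)
        = (rx - ry) * Real.sin (x 0) + ry * (Real.sin (x 0) - Real.sin (y 0)) := by ring
    rw [this]
    calc |(rx - ry) * Real.sin (x 0) + ry * (Real.sin (x 0) - Real.sin (y 0))|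
        ≤ |(rx - ry) * Real.sin (x 0)| + |ry * (Real.sin (x 0) - Real.sin (y 0))| := abs_add_le _ _
      _ ≤ |rx - ry| + |x 0 - y 0| := by
          rw [abs_mul, abs_mul]
          have h1 : |rx - ry| * |Real.sin (x 0)| ≤ |rx - ry| * 1 :=
            mul_le_mul_of_nonneg_left (Real.abs_sin_le_one _) (abs_nonneg _)
          have h2 : |ry| * |Real.sin (x 0) - Real.sin (y 0)| ≤ 1 * |x 0 - y 0| := by
            apply mul_le_mul (by rwa [abs_of_nonneg (Real.sqrt_nonneg _)])
              (sin_lip _ _) (abs_nonneg _) zero_le_one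
          linarith
  rw [dist_eq_norm, key]
  calc ‖(rx * Real.cos (x 0) - ry * Real.cos (y 0)) • b 1 +
      ((rx * Real.sin (x 0) - ry * Real.sin (y 0)) • b 2 + ((x 1) - (y 1)) • b 0)‖
      ≤ ‖(rx * Real.cos (x 0) - ry * Real.cos (y 0)) • b 1‖ +
        (‖(rx * Real.sin (x 0) - ry * Real.sin (y 0)) • b 2‖ + ‖((x 1) - (y 1)) • b 0‖) :=
        (norm_add_le _ _).trans (by gcongr; exact norm_add_le _ _)
    _ = |rx * Real.cos (x 0) - ry * Real.cos (y 0)| +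
        (|rx * Real.sin (x 0) - ry * Real.sin (y 0)| + |x 1 - y 1|) := by
        simp [norm_smul, hb, Real.norm_eq_abs]
    _ ≤ (|rx - ry| + |x 0 - y 0|) + ((|rx - ry| + |x 0 - y 0|) + |x 1 - y 1|) := by
        gcongr
    _ ≤ 7 * dist x y := by
        push_cast
        nlinarith [hrxy, hd0, hd1, dist_nonneg (x := x) (y := y)]

/-- Coverage: points of the sphere with `|⟪u,p⟫| ≤ t` lie in the chart image. -/
lemma strip_subset {u : V3} (hu : u ∈ sph) (b : OrthonormalBasis (Fin 3) ℝ V3)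
    (hb0 : b 0 = u) {t : ℝ} (ht : t ≤ 3/5) :
    {p : V3 | |∑ i, u i * p i| ≤ t} ∩ sph ⊆
      chart b '' (Set.univ.pi ![Set.Icc (-π) π, Set.Icc (-t) t]) := by
  rintro p ⟨hpt, hps⟩
  set a : Fin 3 → ℝ := fun i => (inner ℝ (b i) p : ℝ) with ha
  have hsum : ∑ i, (a i)^2 = 1 := by
    have h1 : ‖b.repr p‖ = ‖p‖ := b.repr.norm_map p
    rw [norm_one_of_sph hps, EuclideanSpace.norm_eq] at h1
    have h2 : √(∑ i, (b.repr p i)^2) = 1 := by simpa using h1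
    have h3 := congrArg (fun x : ℝ => x^2) h2
    simp only [Real.sq_sqrt (by positivity : (0:ℝ) ≤ ∑ i, (b.repr p i)^2), one_pow] at h3
    simpa [ha, OrthonormalBasis.repr_apply_apply] using h3
  have ha0 : a 0 = ∑ i, u i * p i := by rw [ha]; simp [hb0, inner_eq_sum]
  have hat : |a 0| ≤ t := by rwa [ha0]
  have hs35 : |a 0| ≤ 3/5 := hat.trans ht
  set z : ℂ := ⟨a 1, a 2⟩ with hz
  have ht0 : (0:ℝ) ≤ t := le_trans (abs_nonneg _) hat
  have h12 : (a 1)^2 + (a 2)^2 = 1 - (a 0)^2 := by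
    have := hsum
    rw [Fin.sum_univ_three] at this
    linarith
  have habs : ‖z‖ = Real.sqrt (1 - (a 0)^2) := by
    rw [Complex.norm_def, Complex.normSq_mk]
    congr 1
    nlinarith [h12]
  have hzpos : (0:ℝ) < Real.sqrt (1 - (a 0)^2) := by
    apply Real.sqrt_pos.2
    nlinarith [abs_le.1 hs35]
  have hzne : z ≠ 0 := by
    intro h
    rw [h] at habs
    simp at habs
    exact absurd habs.symm (ne_of_gt hzpos)
  refine ⟨![z.arg, a 0], ?_, ?_⟩
  · intro i _
    fin_cases i
    · simpa using Set.mem_Icc.2 ⟨(Complex.arg_mem_Ioc z).1.le, Complex.arg_le_pi z⟩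
    · simpa using abs_le.1 hat
  · have hx0 : (![z.arg, a 0] : Fin 2 → ℝ) 0 = z.arg := rfl
    have hx1 : (![z.arg, a 0] : Fin 2 → ℝ) 1 = a 0 := rfl
    have hcos : Real.cos z.arg = (a 1) / ‖z‖ := by
      rw [Complex.cos_arg hzne]
    have hsin : Real.sin z.arg = (a 2) / ‖z‖ := by
      rw [Complex.sin_arg]
    have hrne : ‖z‖ ≠ 0 := by rw [habs]; exact ne_of_gt hzpos
    rw [chart]
    simp only [hx0, hx1]
    rw [hcos, hsin, ← habs]
    rw [mul_div_cancel₀ _ hrne, mul_div_cancel₀ _ hrne]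
    have := b.sum_repr p
    rw [Fin.sum_univ_three] at this
    simp only [OrthonormalBasis.repr_apply_apply] at this
    have hthis : a 0 • b 0 + a 1 • b 1 + a 2 • b 2 = p := this
    rw [← hthis]; module

lemma measurableSet_strip (u : V3) (t : ℝ) :
    MeasurableSet {p : V3 | |∑ i, u i * p i| ≤ t} := by
  have hc : Continuous (fun p : V3 => |∑ i, u i * p i|) := by
    apply Continuous.abs
    exact continuous_finset_sum _ (fun i _ => continuous_const.mul (PiLp.continuous_apply 2 _ i))
  exact (isClosed_le hc continuous_const).measurableSet

lemma strip_bound {u : V3} (hu : u ∈ sph) {t : ℝ} (ht0 : 0 ≤ t) (ht : t ≤ 3/5) :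
    μS {p : V3 | |∑ i, u i * p i| ≤ t} ≤ ENNReal.ofReal (800 * t) := by
  obtain ⟨b, hb0⟩ := exists_onb_head hu
  have hsub := strip_subset hu b hb0 ht
  have hlip : LipschitzOnWith 7 (chart b) (Set.univ.pi ![Set.Icc (-π) π, Set.Icc (-t) t]) := by
    apply (chart_lip b).mono
    intro x hx
    have hx1 := hx 1 (Set.mem_univ 1)
    simp only [Matrix.cons_val_one, Matrix.head_cons] at hx1
    have : |x 1| ≤ t := abs_le.2 ⟨hx1.1, hx1.2⟩
    exact le_trans this ht
  have himg := hlip.hausdorffMeasure_image_le (by norm_num : (0:ℝ) ≤ 2)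
  have hμH : (μH[(2:ℝ)] : Measure (Fin 2 → ℝ)) = volume := by
    have h := MeasureTheory.hausdorffMeasure_pi_real (ι := Fin 2)
    have hc : ((Fintype.card (Fin 2) : ℕ) : ℝ) = (2:ℝ) := by simp
    rw [hc] at h
    exact h
  have hvol : μH[(2:ℝ)] (Set.univ.pi ![Set.Icc (-π) π, Set.Icc (-t) t])
      = ENNReal.ofReal (2*π) * ENNReal.ofReal (2*t) := by
    rw [hμH, volume_pi_pi]
    rw [Fin.prod_univ_two]
    simp only [Matrix.cons_val_zero, Matrix.cons_val_one, Matrix.head_cons, Real.volume_Icc]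
    congr 1 <;> congr 1 <;> ring
  calc μS {p : V3 | |∑ i, u i * p i| ≤ t}
      = μH[2] ({p : V3 | |∑ i, u i * p i| ≤ t} ∩ sph) := by
        rw [μS, Measure.restrict_apply (measurableSet_strip u t)]
    _ ≤ μH[2] (chart b '' (Set.univ.pi ![Set.Icc (-π) π, Set.Icc (-t) t])) :=
        measure_mono hsub
    _ ≤ (7:ℝ≥0∞) ^ (2:ℝ) * μH[(2:ℝ)] (Set.univ.pi ![Set.Icc (-π) π, Set.Icc (-t) t]) := himg
    _ = 49 * (ENNReal.ofReal (2*π) * ENNReal.ofReal (2*t)) := by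
        rw [hvol]
        congr 1
        rw [show (2:ℝ) = ((2:ℕ):ℝ) by norm_num, ENNReal.rpow_natCast]
        norm_num
    _ ≤ ENNReal.ofReal (800 * t) := by
        rw [← ENNReal.ofReal_mul (by positivity), ← ENNReal.ofReal_ofNat,
          ← ENNReal.ofReal_mul (by norm_num)]
        apply ENNReal.ofReal_le_ofReal
        have hp4 : π * t ≤ 4 * t := mul_le_mul_of_nonneg_right Real.pi_le_four ht0
        calc 49 * (2*π*(2*t)) = 196*(π*t) := by ring
          _ ≤ 196*(4*t) := by linarith
          _ ≤ 800*t := by linarith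

lemma sph_cover : sph ⊆ ⋃ i : Fin 3, {p : V3 | |∑ j, (EuclideanSpace.single i (1:ℝ)) j * p j| ≤ 3/5} := by
  intro p hp
  by_contra h
  simp only [Set.mem_iUnion, not_exists, Set.mem_setOf_eq, not_le] at h
  have hsv : ∀ i : Fin 3, (∑ j, (EuclideanSpace.single i (1:ℝ)) j * p j) = p i := by
    intro i
    rw [Finset.sum_eq_single i]
    · simp
    · intro j _ hj; rw [EuclideanSpace.single_apply, if_neg hj, zero_mul]
    · simp
  have h3 : ∀ i : Fin 3, (3/5:ℝ) < |p i| := fun i => by simpa [hsv i] using h i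
  have hs := sum_sq_of_sph hp
  rw [Fin.sum_univ_three] at hs
  have h0 := h3 0; have h1 := h3 1; have h2 := h3 2
  nlinarith [sq_abs (p 0), sq_abs (p 1), sq_abs (p 2), abs_nonneg (p 0), abs_nonneg (p 1), abs_nonneg (p 2)]

lemma sph_single_mem (i : Fin 3) : (EuclideanSpace.single i (1:ℝ)) ∈ sph := by simp [sph]

lemma μS_univ_le : μS Set.univ ≤ ENNReal.ofReal 1440 := by
  have : μS Set.univ = μH[2] sph := by
    rw [μS, Measure.restrict_apply MeasurableSet.univ, Set.univ_inter]
  rw [this]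
  have hcov : sph ⊆ ⋃ i : Fin 3,
      ({p : V3 | |∑ j, (EuclideanSpace.single i (1:ℝ)) j * p j| ≤ 3/5} ∩ sph) := by
    intro p hp
    obtain ⟨s, ⟨i, rfl⟩, hps⟩ := sph_cover hp
    exact Set.mem_iUnion.2 ⟨i, hps, hp⟩
  calc μH[2] sph
      ≤ μH[2] (⋃ i : Fin 3, ({p : V3 | |∑ j, (EuclideanSpace.single i (1:ℝ)) j * p j| ≤ 3/5} ∩ sph)) :=
        measure_mono hcov
    _ ≤ ∑ i : Fin 3, μH[2] ({p : V3 | |∑ j, (EuclideanSpace.single i (1:ℝ)) j * p j| ≤ 3/5} ∩ sph) :=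
        measure_iUnion_fintype_le _ _
    _ ≤ ∑ _i : Fin 3, ENNReal.ofReal (800 * (3/5)) := by
        apply Finset.sum_le_sum
        intro i _
        have hb := strip_bound (sph_single_mem i) (by norm_num : (0:ℝ) ≤ 3/5) (le_refl _)
        rw [μS, Measure.restrict_apply (measurableSet_strip _ _)] at hb
        simpa using hb
    _ = ENNReal.ofReal 1440 := by
        rw [Fin.sum_univ_three]
        rw [← ENNReal.ofReal_add (by norm_num) (by norm_num), ← ENNReal.ofReal_add (by norm_num) (by norm_num)]
        norm_num

instance : IsFiniteMeasure μS :=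
  ⟨lt_of_le_of_lt μS_univ_le (by simp)⟩

end Strip

section Analytic

lemma ae_sph : ∀ᵐ p ∂μS, p ∈ sph := ae_restrict_mem measurableSet_sph

lemma coord_sq_le {p : V3} (hp : p ∈ sph) (i : Fin 3) : (p i)^2 ≤ 1 := by
  have h1 := sum_sq_of_sph hp
  have h : ∀ j ∈ Finset.univ, (0:ℝ) ≤ (p j)^2 := fun j _ => sq_nonneg _
  calc (p i)^2 ≤ ∑ j, (p j)^2 := Finset.single_le_sum h (Finset.mem_univ i)
    _ = 1 := h1

lemma abs_coord_le {p : V3} (hp : p ∈ sph) (i : Fin 3) : |p i| ≤ 1 := by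
  nlinarith [coord_sq_le hp i, sq_abs (p i), abs_nonneg (p i)]

lemma mcoord (i : Fin 3) : Measurable (fun p : V3 => p i) :=
  (PiLp.continuous_apply 2 _ i).measurable

lemma abs2_le_one {q : V3} (hq : q ∈ sph) (i j : Fin 3) : |q i| * |q j| ≤ 1 := by
  have h1 := abs_coord_le hq i
  have h2 := abs_coord_le hq j
  nlinarith [abs_nonneg (q i), abs_nonneg (q j)]

lemma norm_coord_mul_le {q : V3} (hq : q ∈ sph) (i j : Fin 3) (c : ℝ) :
    ‖q i * q j * c‖ ≤ |c| := by
  have h3 : ‖q i * q j * c‖ = (|q i| * |q j|) * |c| := by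
    rw [Real.norm_eq_abs, abs_mul, abs_mul]
  rw [h3]
  calc (|q i| * |q j|) * |c| ≤ 1 * |c| :=
        mul_le_mul_of_nonneg_right (abs2_le_one hq i j) (abs_nonneg _)
    _ = |c| := one_mul _

lemma integrable_coord_mul {f : V3 → ℝ} (hf : IsProb f) (i j : Fin 3) :
    Integrable (fun q : V3 => q i * q j * f q) μS := by
  apply Integrable.mono' hf.1.abs
  · exact (((mcoord i).mul (mcoord j)).aemeasurable.mul
      hf.1.aestronglyMeasurable.aemeasurable).aestronglyMeasurable
  · filter_upwards [ae_sph] with q hq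
    exact norm_coord_mul_le hq i j (f q)

/-- The second moments of `f`. -/
def Mom (f : V3 → ℝ) (i j : Fin 3) : ℝ := ∫ q, q i * q j * f q ∂μS

lemma Mom_abs_le {f : V3 → ℝ} (hf : IsProb f) (i j : Fin 3) : |Mom f i j| ≤ 1 := by
  have h1 : |Mom f i j| ≤ ∫ q, |f q| ∂μS := by
    rw [Mom]
    rw [← Real.norm_eq_abs]
    calc ‖∫ q, q i * q j * f q ∂μS‖ ≤ ∫ q, ‖q i * q j * f q‖ ∂μS :=
          norm_integral_le_integral_norm _
      _ ≤ ∫ q, |f q| ∂μS := by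
          apply integral_mono_ae (integrable_coord_mul hf i j).norm hf.1.abs
          filter_upwards [ae_sph] with q hq
          exact norm_coord_mul_le hq i j (f q)
  have h2 : ∫ q, |f q| ∂μS = 1 := by
    rw [← hf.2.2]
    apply integral_congr_ae
    filter_upwards [hf.2.1] with q hq
    exact abs_of_nonneg hq
  linarith

lemma Kf_eq {f : V3 → ℝ} (hf : IsProb f) (p : V3) :
    Kf f p = (∑ i, ∑ j, p i * p j * Mom f i j) - 1/3 := by
  have hptwise : ∀ q : V3, ((∑ i, p i * q i) ^ 2 - 1 / 3) * f q
      = (∑ i, ∑ j, (p i * p j) * (q i * q j * f q)) - (1/3) * f q := by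
    intro q
    rw [sq, Finset.sum_mul_sum, sub_mul, Finset.sum_mul]
    congr 1
    apply Finset.sum_congr rfl
    intro i _
    rw [Finset.sum_mul]
    apply Finset.sum_congr rfl
    intro j _
    ring
  rw [Kf]
  simp_rw [hptwise]
  rw [integral_sub (by
      apply integrable_finset_sum
      intro i _
      apply integrable_finset_sum
      intro j _
      exact (integrable_coord_mul hf i j).const_mul _)
    (hf.1.const_mul _)]
  rw [integral_finset_sum _ (fun i _ => by
      apply integrable_finset_sum
      intro j _
      exact (integrable_coord_mul hf i j).const_mul _)]
  congr 1
  · apply Finset.sum_congr rfl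
    intro i _
    rw [integral_finset_sum _ (fun j _ => (integrable_coord_mul hf i j).const_mul _)]
    apply Finset.sum_congr rfl
    intro j _
    rw [integral_const_mul, Mom]
  · rw [integral_const_mul, hf.2.2, mul_one]

lemma Mom_eq {f : V3 → ℝ} {Q : Mat3} (hf : IsProb f) (hQf : Qten f = Q) (i j : Fin 3) :
    Mom f i j = Q i j + (if i = j then (1:ℝ)/3 else 0) := by
  have hQ : Q i j = ∫ p, f p * (p i * p j - if i = j then (1:ℝ)/3 else 0) ∂μS := by
    rw [← hQf]; rfl
  have hsplit : ∀ p : V3, f p * (p i * p j - if i = j then (1:ℝ)/3 else 0)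
      = p i * p j * f p - (if i = j then (1:ℝ)/3 else 0) * f p := by intro p; ring
  simp only [hsplit] at hQ
  rw [integral_sub (integrable_coord_mul hf i j) (hf.1.const_mul _), integral_const_mul,
    hf.2.2, mul_one] at hQ
  rw [Mom]
  linarith

lemma fKf_repr {f : V3 → ℝ} (hf : IsProb f) (c : ℝ) (p : V3) :
    f p * (Kf f p - c) = (∑ i, ∑ j, Mom f i j * (p i * p j * f p)) - (1/3 + c) * f p := by
  rw [Kf_eq hf p]
  have h1 : f p * (∑ i, ∑ j, p i * p j * Mom f i j)
      = ∑ i, ∑ j, Mom f i j * (p i * p j * f p) := by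
    rw [Finset.mul_sum]
    apply Finset.sum_congr rfl
    intro i _
    rw [Finset.mul_sum]
    apply Finset.sum_congr rfl
    intro j _
    ring
  linear_combination h1

lemma integrable_sum_part {f : V3 → ℝ} (hf : IsProb f) :
    Integrable (fun p : V3 => ∑ i, ∑ j, Mom f i j * (p i * p j * f p)) μS :=
  integrable_finset_sum _ fun i _ => integrable_finset_sum _ fun j _ =>
    (integrable_coord_mul hf i j).const_mul _

lemma integrable_fKf {f : V3 → ℝ} (hf : IsProb f) (c : ℝ) :
    Integrable (fun p => f p * (Kf f p - c)) μS := by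
  have h : (fun p => f p * (Kf f p - c))
      = fun p => (∑ i, ∑ j, Mom f i j * (p i * p j * f p)) - (1/3 + c) * f p :=
    funext (fKf_repr hf c)
  rw [h]
  exact (integrable_sum_part hf).sub (hf.1.const_mul _)

lemma integral_fKf {f : V3 → ℝ} (hf : IsProb f) (c : ℝ) :
    ∫ p, f p * (Kf f p - c) ∂μS = (∑ i, ∑ j, (Mom f i j)^2) - (1/3 + c) := by
  simp_rw [fKf_repr hf c]
  rw [integral_sub (integrable_sum_part hf) (hf.1.const_mul _)]
  rw [integral_const_mul, hf.2.2, mul_one]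
  congr 1
  rw [integral_finset_sum _ (fun i _ => integrable_finset_sum _ fun j _ =>
    (integrable_coord_mul hf i j).const_mul _)]
  apply Finset.sum_congr rfl
  intro i _
  rw [integral_finset_sum _ (fun j _ => (integrable_coord_mul hf i j).const_mul _)]
  apply Finset.sum_congr rfl
  intro j _
  rw [integral_const_mul, sq]
  rfl

lemma mdot_eq_sum {Q : Mat3} (hQ : Q.IsSymm) : mdot Q Q = ∑ i, ∑ j, (Q i j)^2 := by
  rw [mdot, Matrix.trace_fin_three]
  simp only [Matrix.mul_apply, Fin.sum_univ_three]
  have h01 := hQ.apply 0 1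
  have h02 := hQ.apply 0 2
  have h12 := hQ.apply 1 2
  have h10 := hQ.apply 1 0
  have h20 := hQ.apply 2 0
  have h21 := hQ.apply 2 1
  ring_nf
  nlinarith [h01, h02, h12, h10, h20, h21, sq_nonneg (Q 0 1)]

lemma sum_Mom_sq {f : V3 → ℝ} {Q : Mat3} (hf : IsProb f) (hQf : Qten f = Q) (hQ : Sym0 Q) :
    (∑ i, ∑ j, (Mom f i j)^2) = mdot Q Q + 1/3 := by
  have hM : ∀ i j, Mom f i j = Q i j + (if i = j then (1:ℝ)/3 else 0) := Mom_eq hf hQf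
  have htr := hQ.2
  rw [Matrix.trace_fin_three] at htr
  rw [mdot_eq_sum hQ.1]
  simp only [Fin.sum_univ_three, hM]
  norm_num [Fin.ext_iff]
  linear_combination (2/3)*htr

lemma key_integral {f : V3 → ℝ} {Q : Mat3} (hf : IsProb f) (hQf : Qten f = Q) (hQ : Sym0 Q)
    (c : ℝ) : ∫ p, f p * (Kf f p - c) ∂μS = mdot Q Q - c := by
  rw [integral_fKf hf c, sum_Mom_sq hf hQf hQ]
  ring

lemma qf_moment {f : V3 → ℝ} {Q : Mat3} (hf : IsProb f) (hQf : Qten f = Q) (u : V3)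
    (hu : ∑ i, (u i)^2 = 1) :
    ∫ p, f p * (∑ i, u i * p i)^2 ∂μS = qf Q u + 1/3 := by
  have hpt : ∀ p : V3, f p * (∑ i, u i * p i)^2
      = ∑ i, ∑ j, (u i * u j) * (p i * p j * f p) := by
    intro p
    rw [sq, Finset.sum_mul_sum, Finset.mul_sum]
    apply Finset.sum_congr rfl
    intro i _
    rw [Finset.mul_sum]
    apply Finset.sum_congr rfl
    intro j _
    ring
  simp_rw [hpt]
  rw [integral_finset_sum _ (fun i _ => integrable_finset_sum _ fun j _ =>
    (integrable_coord_mul hf i j).const_mul _)]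
  have : ∀ i ∈ Finset.univ, (∫ p, ∑ j, (u i * u j) * (p i * p j * f p) ∂μS)
      = ∑ j, (u i * u j) * Mom f i j := by
    intro i _
    rw [integral_finset_sum _ (fun j _ => (integrable_coord_mul hf i j).const_mul _)]
    apply Finset.sum_congr rfl
    intro j _
    rw [integral_const_mul]
    rfl
  rw [Finset.sum_congr rfl this]
  simp only [Mom_eq hf hQf]
  rw [qf]
  simp only [Fin.sum_univ_three] at hu ⊢
  norm_num [Fin.ext_iff]
  linear_combination hu/3

lemma xlogx_ge {x : ℝ} (hx : 0 ≤ x) : x - 1 ≤ x * Real.log x := by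
  rcases eq_or_lt_of_le hx with h | h
  · simp [← h]
  · have hlog : Real.log x⁻¹ ≤ x⁻¹ - 1 := Real.log_le_sub_one_of_pos (by positivity)
    rw [Real.log_inv] at hlog
    have hmul := mul_le_mul_of_nonneg_left hlog hx
    rw [mul_sub, mul_inv_cancel₀ (ne_of_gt h)] at hmul
    nlinarith

lemma c_pos {f : V3 → ℝ} {Q : Mat3} {η : ℝ} (hf : IsProb f) (hQf : Qten f = Q) (hQ : Sym0 Q)
    (hpos : ∀ᵐ p ∂μS, f p ≠ 0 → η < Kf f p) : 0 < mdot Q Q - η := by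
  have hnn : (0 : V3 → ℝ) ≤ᶠ[ae μS] fun p => f p * (Kf f p - η) := by
    filter_upwards [hf.2.1, hpos] with p h1 h2
    rcases eq_or_ne (f p) 0 with h | h
    · simp [h]
    · exact mul_nonneg h1 (by linarith [h2 h])
  have h0 : 0 ≤ mdot Q Q - η := by
    rw [← key_integral hf hQf hQ η]
    exact integral_nonneg_of_ae hnn
  rcases eq_or_lt_of_le h0 with h | h
  · exfalso
    have hz : ∫ p, f p * (Kf f p - η) ∂μS = 0 := by
      rw [key_integral hf hQf hQ η, ← h]
    have hae := (integral_eq_zero_iff_of_nonneg_ae hnn (integrable_fKf hf η)).1 hz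
    have hf0 : f =ᶠ[ae μS] 0 := by
      filter_upwards [hae, hf.2.1, hpos] with p h1 h2 h3
      rcases eq_or_ne (f p) 0 with h' | h'
      · exact h'
      · exfalso
        have hKp : 0 < Kf f p - η := by linarith [h3 h']
        have : f p * (Kf f p - η) = 0 := h1
        rcases mul_eq_zero.1 this with h'' | h''
        · exact h' h''
        · linarith
    have : (1:ℝ) = 0 := by
      rw [← hf.2.2, integral_congr_ae hf0]
      simp
    norm_num at this
  · exact h

lemma witness_est {f : V3 → ℝ} {Q : Mat3} {η : ℝ} (hf : IsProb f) (hQf : Qten f = Q)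
    (hQ : Sym0 Q)
    (hpos : ∀ᵐ p ∂μS, f p ≠ 0 → η < Kf f p)
    (hint : Integrable (fun p => f p * Real.log (f p) - f p * Real.log (Kf f p - η)) μS) :
    Integrable (fun p => f p * Real.log (f p)) μS ∧
    ∫ p, f p * Real.log (f p) ∂μS ≤
      (∫ p, f p * Real.log (f p) - f p * Real.log (Kf f p - η) ∂μS) + Real.log (mdot Q Q - η) := by
  set c := mdot Q Q - η with hc_def
  have hc : 0 < c := c_pos hf hQf hQ hpos
  set G : V3 → ℝ := fun p => f p * Real.log (f p) - f p * Real.log (Kf f p - η) with hG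
  set H : V3 → ℝ := fun p => (1/c) * (f p * (Kf f p - η)) + (Real.log c - 1) * f p with hH
  have hH_int : Integrable H μS := ((integrable_fKf hf η).const_mul _).add (hf.1.const_mul _)
  have hH_val : ∫ p, H p ∂μS = Real.log c := by
    rw [hH]
    simp only
    rw [integral_add (((integrable_fKf hf η)).const_mul _) (hf.1.const_mul _),
      integral_const_mul, integral_const_mul, key_integral hf hQf hQ, hf.2.2]
    field_simp
    rw [← hc_def]; ring
  have hupper : ∀ᵐ p ∂μS, f p * Real.log (f p) ≤ G p + H p := by
    filter_upwards [hf.2.1, hpos] with p h1 h2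
    rcases eq_or_ne (f p) 0 with h | h
    · simp [hG, hH, h]
    · have hfp : 0 < f p := lt_of_le_of_ne h1 (Ne.symm h)
      have hK : 0 < Kf f p - η := by linarith [h2 h]
      have hlog : Real.log ((Kf f p - η) / c) ≤ (Kf f p - η) / c - 1 :=
        Real.log_le_sub_one_of_pos (by positivity)
      rw [Real.log_div (ne_of_gt hK) (ne_of_gt hc)] at hlog
      have hmul := mul_le_mul_of_nonneg_left hlog h1
      simp only [hG, hH]
      have hexp : f p * ((Kf f p - η) / c) = (1/c) * (f p * (Kf f p - η)) := by ring
      nlinarith [hmul]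
  have hlower : ∀ᵐ p ∂μS, f p - 1 ≤ f p * Real.log (f p) := by
    filter_upwards [hf.2.1] with p h1
    exact xlogx_ge h1
  have hmeas : AEStronglyMeasurable (fun p => f p * Real.log (f p)) μS := by
    have hm : AEMeasurable f μS := hf.1.aemeasurable
    exact (hm.mul (Real.measurable_log.comp_aemeasurable hm)).aestronglyMeasurable
  have hGH_int : Integrable (fun p => G p + H p) μS := hint.add hH_int
  have hf1_int : Integrable (fun p => f p - 1) μS := hf.1.sub (integrable_const 1)
  have hflnf_int : Integrable (fun p => f p * Real.log (f p)) μS := by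
    apply Integrable.mono' (hGH_int.abs.add hf1_int.abs) hmeas
    filter_upwards [hupper, hlower] with p hu hl
    rw [Real.norm_eq_abs]
    show |f p * Real.log (f p)| ≤ |G p + H p| + |f p - 1|
    rw [abs_le]
    constructor
    · have := neg_abs_le (f p - 1)
      have h0 : 0 ≤ |G p + H p| := abs_nonneg _
      linarith
    · have := le_abs_self (G p + H p)
      have h0 : 0 ≤ |f p - 1| := abs_nonneg _
      linarith
  refine ⟨hflnf_int, ?_⟩
  calc ∫ p, f p * Real.log (f p) ∂μS ≤ ∫ p, G p + H p ∂μS :=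
        integral_mono_ae hflnf_int hGH_int hupper
    _ = (∫ p, G p ∂μS) + ∫ p, H p ∂μS := integral_add hint hH_int
    _ = (∫ p, G p ∂μS) + Real.log c := by rw [hH_val]

/-- The (finite) total surface measure. -/
def Sconst : ℝ := (μS Set.univ).toReal

lemma ent_lb {f : V3 → ℝ} (hf : IsProb f)
    (hint : Integrable (fun p => f p * Real.log (f p)) μS) :
    1 - Sconst ≤ ∫ p, f p * Real.log (f p) ∂μS := by
  have hmono : ∀ᵐ p ∂μS, f p - 1 ≤ f p * Real.log (f p) := by
    filter_upwards [hf.2.1] with p h1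
    exact xlogx_ge h1
  have hfm1 : Integrable (fun p => f p - 1) μS := hf.1.sub (integrable_const 1)
  have h := integral_mono_ae hfm1 hint hmono
  rw [integral_sub hf.1 (integrable_const 1), hf.2.2, integral_const] at h
  simpa [Sconst, smul_eq_mul, Measure.real] using h

lemma tangent_le {x c : ℝ} (hx : 0 ≤ x) (hc : 0 < c) :
    c * Real.log c + (Real.log c + 1) * (x - c) ≤ x * Real.log x := by
  rcases eq_or_lt_of_le hx with h | hx'
  · rw [← h]
    have he : c * Real.log c + (Real.log c + 1) * (0 - c) = -c := by ring
    rw [he]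
    simp only [zero_mul]
    linarith
  · have hlog : Real.log (c / x) ≤ c / x - 1 := Real.log_le_sub_one_of_pos (by positivity)
    rw [Real.log_div (ne_of_gt hc) (ne_of_gt hx')] at hlog
    have h2 : x * (Real.log c - Real.log x) ≤ c - x := by
      calc x * (Real.log c - Real.log x) ≤ x * (c/x - 1) :=
            mul_le_mul_of_nonneg_left hlog (le_of_lt hx')
        _ = c - x := by field_simp
    nlinarith [h2]

lemma cont_ip (u : V3) : Continuous (fun p : V3 => ∑ i, u i * p i) :=
  continuous_finset_sum _ (fun i _ => continuous_const.mul (PiLp.continuous_apply 2 _ i))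

lemma ipsq_le_one {u p : V3} (hu : u ∈ sph) (hp : p ∈ sph) : (∑ i, u i * p i)^2 ≤ 1 := by
  have h := Finset.sum_mul_sq_le_sq_mul_sq Finset.univ (fun i => u i) (fun i => p i)
  have h1 := sum_sq_of_sph hu
  have h2 := sum_sq_of_sph hp
  calc (∑ i, u i * p i)^2 ≤ (∑ i, (u i)^2) * ∑ i, (p i)^2 := h
    _ = 1 := by rw [h1, h2, mul_one]

lemma integrable_f_ipsq {f : V3 → ℝ} (hf : IsProb f) {u : V3} (hu : u ∈ sph) :
    Integrable (fun p => f p * (∑ i, u i * p i)^2) μS := by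
  apply Integrable.mono' hf.1.abs
  · exact (hf.1.aemeasurable.mul
      (((cont_ip u).pow 2).measurable.aemeasurable)).aestronglyMeasurable
  · filter_upwards [ae_sph] with p hp
    have h1 := ipsq_le_one hu hp
    have h2 : (0:ℝ) ≤ (∑ i, u i * p i)^2 := sq_nonneg _
    rw [Real.norm_eq_abs, abs_mul, abs_of_nonneg h2]
    calc |f p| * (∑ i, u i * p i)^2 ≤ |f p| * 1 :=
          mul_le_mul_of_nonneg_left h1 (abs_nonneg _)
      _ = |f p| := mul_one _

lemma ent_lb2 {f : V3 → ℝ} (hf : IsProb f)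
    (hint : Integrable (fun p => f p * Real.log (f p)) μS)
    {u : V3} (hu : u ∈ sph) {t : ℝ} (ht : 0 < t) (ht8 : t ≤ 1/800)
    (hmom : ∫ p, f p * (∑ i, u i * p i)^2 ∂μS ≤ t^4) :
    (3/4) * Real.log (1/(800*t)) - (1 + Sconst) ≤ ∫ p, f p * Real.log (f p) ∂μS := by
  set A : Set V3 := {p : V3 | |∑ i, u i * p i| ≤ t} with hA_def
  have hA : MeasurableSet A := measurableSet_strip u t
  set m : ℝ := ∫ p in A, f p ∂μS with hm_def
  have hfi2 := integrable_f_ipsq hf hu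
  have hsplit : m + ∫ p in Aᶜ, f p ∂μS = 1 := by
    rw [hm_def, integral_add_compl hA hf.1, hf.2.2]
  have hAc_nonneg : 0 ≤ ∫ p in Aᶜ, f p ∂μS := by
    apply integral_nonneg_of_ae
    exact ae_restrict_of_ae hf.2.1
  have hm1 : m ≤ 1 := by linarith
  have hcheb : 1 - m ≤ t^2 := by
    have h1 : t^2 * ∫ p in Aᶜ, f p ∂μS ≤ ∫ p in Aᶜ, f p * (∑ i, u i * p i)^2 ∂μS := by
      rw [← integral_const_mul]
      apply integral_mono_ae (hf.1.integrableOn.const_mul _) hfi2.integrableOn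
      filter_upwards [ae_restrict_of_ae hf.2.1, ae_restrict_mem hA.compl] with p h1 h2
      have h3 : t < |∑ i, u i * p i| := by
        by_contra h4
        exact h2 (by simpa [hA_def] using not_lt.1 h4)
      have h4 : t^2 ≤ (∑ i, u i * p i)^2 := by
        have h5 := mul_self_le_mul_self ht.le h3.le
        nlinarith [sq_abs (∑ i, u i * p i)]
      nlinarith [h1]
    have h2 : ∫ p in Aᶜ, f p * (∑ i, u i * p i)^2 ∂μS ≤ t^4 := by
      refine le_trans (setIntegral_le_integral hfi2 ?_) hmom
      filter_upwards [hf.2.1] with p h1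
      positivity
    have h3 : t^2 * (1 - m) ≤ t^2 * t^2 := by
      have : (1:ℝ) - m = ∫ p in Aᶜ, f p ∂μS := by linarith
      rw [this]
      calc t^2 * ∫ p in Aᶜ, f p ∂μS ≤ ∫ p in Aᶜ, f p * (∑ i, u i * p i)^2 ∂μS := h1
        _ ≤ t^4 := h2
        _ = t^2 * t^2 := by ring
    exact le_of_mul_le_mul_left h3 (by positivity)
  have hm34 : 3/4 ≤ m := by
    have ht2 : t^2 ≤ 1/640000 := by nlinarith [ht.le, ht8]
    linarith
  have hμA_le : μS A ≤ ENNReal.ofReal (800 * t) :=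
    strip_bound hu ht.le (by linarith)
  set μAr : ℝ := (μS A).toReal with hμAr_def
  have hμAr_le : μAr ≤ 800 * t := by
    rw [hμAr_def]
    calc (μS A).toReal ≤ (ENNReal.ofReal (800*t)).toReal :=
          ENNReal.toReal_mono ENNReal.ofReal_ne_top hμA_le
      _ = 800 * t := ENNReal.toReal_ofReal (by positivity)
  have hμAr_pos : 0 < μAr := by
    rcases eq_or_ne (μS A) 0 with h | h
    · exfalso
      have : m = 0 := by
        rw [hm_def]
        have : μS.restrict A = 0 := Measure.restrict_eq_zero.2 h
        rw [this, integral_zero_measure]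
      linarith
    · exact ENNReal.toReal_pos h (measure_ne_top μS A)
  set x0 : ℝ := m / μAr with hx0_def
  have hx0 : 0 < x0 := div_pos (by linarith) hμAr_pos
  -- Jensen on A via the tangent line
  have hA_lb : m * Real.log x0 ≤ ∫ p in A, f p * Real.log (f p) ∂μS := by
    have hsubA : Integrable (fun p => f p - x0) (μS.restrict A) :=
      hf.1.integrableOn.sub (integrable_const _)
    have hmulA : Integrable (fun p => (Real.log x0 + 1) * (f p - x0)) (μS.restrict A) :=
      hsubA.const_mul _
    have hlhs_int : Integrable (fun p => x0 * Real.log x0 + (Real.log x0 + 1) * (f p - x0))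
        (μS.restrict A) := (integrable_const _).add hmulA
    have hmono : ∀ᵐ p ∂(μS.restrict A),
        x0 * Real.log x0 + (Real.log x0 + 1) * (f p - x0) ≤ f p * Real.log (f p) := by
      filter_upwards [ae_restrict_of_ae hf.2.1] with p h1
      exact tangent_le h1 hx0
    have h := integral_mono_ae hlhs_int hint.integrableOn hmono
    have hval : ∫ p in A, (x0 * Real.log x0 + (Real.log x0 + 1) * (f p - x0)) ∂μS
        = m * Real.log x0 := by
      rw [integral_add (integrable_const _) hmulA, setIntegral_const,
        integral_const_mul, integral_sub hf.1.integrableOn (integrable_const _),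
        setIntegral_const]
      have hμx0 : μAr * x0 = m := by
        rw [hx0_def]
        field_simp
      simp only [smul_eq_mul, Measure.real, ← hμAr_def, ← hm_def]
      nlinarith [hμx0]
    linarith [hval ▸ h]
  have hAc_lb : -Sconst ≤ ∫ p in Aᶜ, f p * Real.log (f p) ∂μS := by
    have hmono : ∀ᵐ p ∂(μS.restrict Aᶜ), f p - 1 ≤ f p * Real.log (f p) := by
      filter_upwards [ae_restrict_of_ae hf.2.1] with p h1
      exact xlogx_ge h1
    have hsubc : Integrable (fun p => f p - 1) (μS.restrict Aᶜ) :=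
      hf.1.integrableOn.sub (integrable_const _)
    have h := integral_mono_ae hsubc hint.integrableOn hmono
    rw [integral_sub hf.1.integrableOn (integrable_const _), setIntegral_const] at h
    have hμc : (μS Aᶜ).toReal ≤ Sconst := by
      rw [Sconst]
      exact ENNReal.toReal_mono (measure_ne_top _ _) (measure_mono (Set.subset_univ _))
    simp only [smul_eq_mul, mul_one, Measure.real] at h
    linarith
  have htotal : ∫ p, f p * Real.log (f p) ∂μS
      = (∫ p in A, f p * Real.log (f p) ∂μS) + ∫ p in Aᶜ, f p * Real.log (f p) ∂μS :=
    (integral_add_compl hA hint).symm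
  -- lower bound for m * log x0
  have hlogx0 : Real.log x0 = Real.log m - Real.log μAr :=
    Real.log_div (by linarith) (ne_of_gt hμAr_pos)
  have hmlogm : m - 1 ≤ m * Real.log m := xlogx_ge (by linarith)
  have hlogA : Real.log μAr ≤ Real.log (800 * t) :=
    Real.log_le_log hμAr_pos hμAr_le
  have hlog800 : Real.log (800 * t) ≤ 0 :=
    Real.log_nonpos (by positivity) (by linarith)
  have hinv : Real.log (1/(800*t)) = -Real.log (800*t) := by
    rw [one_div, Real.log_inv]
  have hfinal : (3/4) * Real.log (1/(800*t)) - 1/4 ≤ m * Real.log x0 := by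
    rw [hlogx0, mul_sub, hinv]
    have h1 : -(m * Real.log μAr) ≥ -(m * Real.log (800*t)) := by
      have := mul_le_mul_of_nonneg_left hlogA (by linarith : (0:ℝ) ≤ m)
      linarith
    have h2 : -(m * Real.log (800*t)) ≥ (3/4) * (-Real.log (800*t)) := by
      nlinarith [hlog800, hm34]
    nlinarith [hmlogm, hm34]
  linarith [hA_lb, hAc_lb, htotal, hfinal]

lemma exists_qf_lt {Q : Mat3} {a : ℝ} (h : vmin Q < a) : ∃ u ∈ sph, qf Q u < a := by
  rw [vmin] at h
  obtain ⟨⟨u, hu⟩, h2⟩ := exists_lt_of_ciInf_lt h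
  exact ⟨u, hu, h2⟩

lemma Q_abs_le {f : V3 → ℝ} {Q : Mat3} (hf : IsProb f) (hQf : Qten f = Q) (i j : Fin 3) :
    |Q i j| ≤ 4/3 := by
  have h1 := Mom_abs_le hf i j
  have h2 := Mom_eq hf hQf i j
  rw [abs_le] at h1 ⊢
  split_ifs at h2 with h
  · constructor <;> linarith [h1.1, h1.2]
  · constructor <;> linarith [h1.1, h1.2]

lemma mdot_le_16 {f : V3 → ℝ} {Q : Mat3} (hf : IsProb f) (hQf : Qten f = Q) (hQ : Sym0 Q) :
    mdot Q Q ≤ 16 := by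
  rw [mdot_eq_sum hQ.1]
  have hsq : ∀ i j, (Q i j)^2 ≤ 16/9 := by
    intro i j
    have := Q_abs_le hf hQf i j
    nlinarith [abs_nonneg (Q i j), sq_abs (Q i j)]
  simp only [Fin.sum_univ_three]
  linarith [hsq 0 0, hsq 0 1, hsq 0 2, hsq 1 0, hsq 1 1, hsq 1 2, hsq 2 0, hsq 2 1, hsq 2 2]

lemma logc_le {f : V3 → ℝ} {Q : Mat3} {η : ℝ} (hf : IsProb f) (hQf : Qten f = Q)
    (hQ : Sym0 Q) (hc : 0 < mdot Q Q - η) : Real.log (mdot Q Q - η) ≤ 15 + |η| := by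
  have h16 := mdot_le_16 hf hQf hQ
  have h1 := Real.log_le_sub_one_of_pos hc
  have h2 := neg_abs_le η
  linarith

end Analytic

/-- `J(Q,η) ≥ ψ_s(Q) − ln(|Q|² − η)` whenever `J(Q,η) < +∞`; in
particular `J(·,η)` blows up to `+∞` uniformly at the boundary of its domain
`{Q ∈ Sym₀(3) : v_min(Q) > −1/3, |Q|² > η}`. -/
theorem stmt_9 (η : ℝ) (Q : Mat3) (hQ : Sym0 Q) (hfin : Jfun Q η < ⊤) :
    (psiS Q - ((Real.log (mdot Q Q - η) : ℝ) : EReal) ≤ Jfun Q η) ∧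
    (∀ M : ℝ, ∃ δ : ℝ, 0 < δ ∧ ∀ Q' : Mat3,
      Sym0 Q' → -(1/3) < vmin Q' → η < mdot Q' Q' →
      (vmin Q' < -(1/3) + δ ∨ mdot Q' Q' < η + δ) →
      (M : EReal) < Jfun Q' η) := by
  constructor
  · rw [Jfun]
    apply le_sInf
    rintro y ⟨f, hf, hQf, rfl⟩
    rw [FE]
    split_ifs with hcond
    · obtain ⟨hpos, hint⟩ := hcond
      obtain ⟨hflnf, hest⟩ := witness_est hf hQf hQ hpos hint
      have hEnt : EntE f = ((∫ p, f p * Real.log (f p) ∂μS : ℝ) : EReal) := by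
        rw [EntE, if_pos hflnf]
      have h1 : psiS Q ≤ ((∫ p, f p * Real.log (f p) ∂μS : ℝ) : EReal) := by
        rw [psiS]
        exact sInf_le ⟨f, hf, hQf, hEnt⟩
      set yr : ℝ := ∫ p, f p * Real.log (f p) - f p * Real.log (Kf f p - η) ∂μS with hyr
      have h2 : psiS Q ≤ ((yr + Real.log (mdot Q Q - η) : ℝ) : EReal) :=
        h1.trans (EReal.coe_le_coe_iff.2 (by linarith [hest]))
      calc psiS Q - ((Real.log (mdot Q Q - η) : ℝ) : EReal)
          ≤ ((yr + Real.log (mdot Q Q - η) : ℝ) : EReal)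
            - ((Real.log (mdot Q Q - η) : ℝ) : EReal) :=
            EReal.sub_le_sub h2 (le_refl _)
        _ = ((yr : ℝ) : EReal) := by
            rw [← EReal.coe_sub]
            norm_num
    · exact le_top
  · intro M
    set R : ℝ := M + 17 + Sconst + |η| with hR
    set t : ℝ := Real.exp (-(4/3)*(|R|+1)) / 800 with htdef
    have ht : 0 < t := by positivity
    have ht8 : t ≤ 1/800 := by
      rw [htdef]
      have h1 : Real.exp (-(4/3)*(|R|+1)) ≤ 1 := by
        rw [Real.exp_le_one_iff]
        nlinarith [abs_nonneg R]
      linarith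
    have h800t : 800 * t = Real.exp (-(4/3)*(|R|+1)) := by rw [htdef]; ring
    refine ⟨min (Real.exp (-(M + Sconst))) (t^4), lt_min (Real.exp_pos _) (by positivity), ?_⟩
    set δ : ℝ := min (Real.exp (-(M + Sconst))) (t^4) with hδ
    intro Q' hQ' hv hmd hcase
    have hM1 : ∀ y ∈ {y : EReal | ∃ f : V3 → ℝ, IsProb f ∧ Qten f = Q' ∧ FE f η = y},
        ((M+1 : ℝ) : EReal) ≤ y := by
      rintro y ⟨f, hf, hQf, rfl⟩
      rw [FE]
      split_ifs with hcond
      swap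
      · exact le_top
      obtain ⟨hpos, hint⟩ := hcond
      obtain ⟨hflnf, hest⟩ := witness_est hf hQf hQ' hpos hint
      have hc : 0 < mdot Q' Q' - η := c_pos hf hQf hQ' hpos
      rw [EReal.coe_le_coe_iff]
      set yr : ℝ := ∫ p, f p * Real.log (f p) - f p * Real.log (Kf f p - η) ∂μS with hyr
      set Ent : ℝ := ∫ p, f p * Real.log (f p) ∂μS with hEntd
      rcases hcase with hv' | hm'
      · obtain ⟨u, hu, hqf⟩ := exists_qf_lt hv'
        have husq : ∑ i, (u i)^2 = 1 := sum_sq_of_sph hu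
        have hmom : ∫ p, f p * (∑ i, u i * p i)^2 ∂μS ≤ t^4 := by
          rw [qf_moment hf hQf u husq]
          have hδt : δ ≤ t^4 := min_le_right _ _
          linarith
        have hent := ent_lb2 hf hflnf hu ht ht8 hmom
        have hlogt : Real.log (1/(800*t)) = (4/3)*(|R|+1) := by
          rw [h800t, one_div, ← Real.exp_neg, Real.log_exp]
          ring
        have hlogc : Real.log (mdot Q' Q' - η) ≤ 15 + |η| := logc_le hf hQf hQ' hc
        rw [hlogt] at hent
        have hRabs : R ≤ |R| := le_abs_self R
        rw [hR] at hRabs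
        linarith
      · have hcδ : mdot Q' Q' - η < δ := by linarith
        have hlogc : Real.log (mdot Q' Q' - η) ≤ -(M + Sconst) := by
          have h1 : Real.log (mdot Q' Q' - η) < Real.log (Real.exp (-(M+Sconst))) :=
            Real.log_lt_log hc (lt_of_lt_of_le hcδ (min_le_left _ _))
          rw [Real.log_exp] at h1
          linarith
        have hent := ent_lb hf hflnf
        linarith
    have hle : ((M+1 : ℝ) : EReal) ≤ Jfun Q' η := by
      rw [Jfun]
      exact le_sInf hM1
    calc (M : EReal) < ((M+1 : ℝ) : EReal) := EReal.coe_lt_coe_iff.2 (by linarith)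
      _ ≤ Jfun Q' η := hle
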